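/- For every integer n > 1, ‖2^n − 1‖ ≤ 2n + 2·⌊log₂ n⌋ − 2. -/

import Mathlib

/-- `CanRepr n k` : `n` can be written as an expression in `1, +, ·` using `k` ones. -/
inductive CanRepr : ℕ → ℕ → Prop
  | one : CanRepr 1 1
  | add {a b j k : ℕ} : CanRepr a j → CanRepr b k → CanRepr (a + b) (j + k)
  | mul {a b j k : ℕ} : CanRepr a j → CanRepr b k → CanRepr (a * b) (j + k)

/-- Integer complexity `‖n‖`: least number of ones in an expression for `n`. -/
noncomputable def cpx (n : ℕ) : ℕ := sInf {k | CanRepr n k}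

lemma canRepr_two : CanRepr 2 2 := CanRepr.add CanRepr.one CanRepr.one

lemma canRepr_pow_two : ∀ m, 1 ≤ m → CanRepr (2 ^ m) (2 * m)
  | 0, h => by omega
  | 1, _ => by simpa using canRepr_two
  | (m + 2), _ => by
    have h := canRepr_pow_two (m + 1) (by omega)
    have h2 := CanRepr.mul h canRepr_two
    have e1 : 2 ^ (m + 2) = 2 ^ (m + 1) * 2 := by ring
    have e2 : 2 * (m + 2) = 2 * (m + 1) + 2 := by ring
    rw [e1, e2]; exact h2

lemma step_double {m j : ℕ} (hm : 1 ≤ m) (h : CanRepr (2 ^ m - 1) j) :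
    CanRepr (2 ^ (2 * m) - 1) (j + (2 * m + 1)) := by
  have h2 : CanRepr (2 ^ m + 1) (2 * m + 1) :=
    CanRepr.add (canRepr_pow_two m hm) CanRepr.one
  have h3 := CanRepr.mul h h2
  have h1 : 1 ≤ 2 ^ m := Nat.one_le_two_pow
  have e : (2 ^ m - 1) * (2 ^ m + 1) = 2 ^ (2 * m) - 1 := by
    obtain ⟨b, hb⟩ := Nat.exists_eq_add_of_le h1
    have e1 : 2 ^ (2 * m) = 2 ^ m * 2 ^ m := by rw [two_mul, pow_add]
    rw [e1, hb]
    have e2 : (1 + b) * (1 + b) = b * b + 2 * b + 1 := by ring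
    have e3 : (1 + b - 1) * (1 + b + 1) = b * b + 2 * b := by
      have : 1 + b - 1 = b := by omega
      rw [this]; ring
    omega
  rw [e] at h3; exact h3

lemma step_succ {m j : ℕ} (h : CanRepr (2 ^ m - 1) j) :
    CanRepr (2 ^ (m + 1) - 1) (j + 2 + 1) := by
  have h2 : CanRepr ((2 ^ m - 1) * 2) (j + 2) := CanRepr.mul h canRepr_two
  have h3 := CanRepr.add h2 CanRepr.one
  have h1 : 1 ≤ 2 ^ m := Nat.one_le_two_pow
  have e : (2 ^ m - 1) * 2 + 1 = 2 ^ (m + 1) - 1 := by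
    have : 2 ^ (m + 1) = 2 ^ m * 2 := pow_succ 2 m
    omega
  rw [e] at h3; exact h3

lemma aux_mersenne : ∀ n, 2 ≤ n →
    ∃ k, CanRepr (2 ^ n - 1) k ∧ k + 2 ≤ 2 * n + 2 * Nat.log 2 n := by
  intro n
  induction n using Nat.strong_induction_on with
  | _ n ih =>
    intro hn
    rcases eq_or_lt_of_le hn with h2 | h2
    · -- n = 2
      have hn2 : n = 2 := by omega
      subst hn2
      refine ⟨3, ?_, ?_⟩
      · have : CanRepr 3 3 := CanRepr.add canRepr_two CanRepr.one
        simpa using this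
      · have hl2 : Nat.log 2 2 = 1 := by
          rw [Nat.log_eq_one_iff] <;> norm_num
        omega
    rcases eq_or_lt_of_le (Nat.succ_le_of_lt h2) with h3 | h3
    · -- n = 3
      have hn3 : n = 3 := by omega
      subst hn3
      have h33 : CanRepr 3 3 := CanRepr.add canRepr_two CanRepr.one
      have hc : CanRepr (2 ^ 2 - 1) 3 := by simpa using h33
      have := step_succ hc
      refine ⟨6, ?_, ?_⟩
      · exact this
      · have hl : Nat.log 2 3 = 1 := by
          rw [Nat.log_eq_one_iff] <;> norm_num
        omega
    -- n ≥ 4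
    set m := n / 2 with hmdef
    have hm2 : 2 ≤ m := by omega
    have hmn : m < n := by omega
    obtain ⟨k, hk, hkle⟩ := ih m hmn hm2
    have hd := step_double (by omega) hk
    have hlogm : Nat.log 2 (2 * m) = Nat.log 2 m + 1 := by
      rw [mul_comm]
      exact Nat.log_mul_base (by norm_num) (by omega)
    rcases Nat.even_or_odd n with he | ho
    · -- n = 2 * m
      have hne : n = 2 * m := by
        obtain ⟨t, ht⟩ := he; omega
      refine ⟨k + (2 * m + 1), by rw [hne]; exact hd, ?_⟩
      rw [hne, hlogm]; omega
    · -- n = 2 * m + 1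
      have hno : n = 2 * m + 1 := by
        obtain ⟨t, ht⟩ := ho; omega
      have hs := step_succ hd
      have hlog : Nat.log 2 m + 1 ≤ Nat.log 2 (2 * m + 1) := by
        calc Nat.log 2 m + 1 = Nat.log 2 (2 * m) := hlogm.symm
          _ ≤ Nat.log 2 (2 * m + 1) := Nat.log_mono_right (by omega)
      refine ⟨k + (2 * m + 1) + 2 + 1, by rw [hno]; exact hs, ?_⟩
      rw [hno]; omega

theorem cpx_mersenne_le' (n : ℕ) (hn : 1 < n) :
    (cpx (2 ^ n - 1) : ℤ) ≤ 2 * n + 2 * Nat.log 2 n - 2 := by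
  obtain ⟨k, hk, hle⟩ := aux_mersenne n hn
  have hc : cpx (2 ^ n - 1) ≤ k := Nat.sInf_le hk
  have hci : (cpx (2 ^ n - 1) : ℤ) ≤ (k : ℤ) := by exact_mod_cast hc
  have hli : (k : ℤ) + 2 ≤ 2 * n + 2 * Nat.log 2 n := by exact_mod_cast hle
  omega
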